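/- Let 0 < c < 1/4, λ₁ = (1-2c+√(1-4c))/(2c), λ₂ = (1-2c-√(1-4c))/(2c), 0 < α < 1, w_k = (1/α-1)^{k-1}, v_k = (λ₁^k - λ₂^k)/(λ₁-λ₂), and D the bidiagonal matrix with D(i,j) = 1 iff j ∈ {i, i+1}. Then for all p ≥ 0, assuming α - λᵢ(1-α) ≠ 0 for i = 1,2, wᵀ D^p v = (1+λ₁)^p · (α/(λ₁-λ₂)) · [ λ₁/(α - λ₁(1-α)) − ((1+λ₂)/(1+λ₁))^p · λ₂/(α - λ₂(1-α)) ]. -/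

import Mathlib

/-- Sequences indexed by `k : ℕ` represent entries `k+1` (positive-integer indexing);
`Dop` is the action of the bidiagonal matrix `D`: `(D x)_k = x_k + x_{k+1}`. -/
theorem stmt_11
    (c : ℝ) (hc0 : 0 < c) (hc : c < 1 / 4)
    (lam1 lam2 : ℝ)
    (h1 : lam1 = (1 - 2 * c + Real.sqrt (1 - 4 * c)) / (2 * c))
    (h2 : lam2 = (1 - 2 * c - Real.sqrt (1 - 4 * c)) / (2 * c))
    (α : ℝ) (hα0 : 0 < α) (hα1 : α < 1)
    (w : ℕ → ℝ) (hw : ∀ k : ℕ, w k = (1 / α - 1) ^ k)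
    (v : ℕ → ℝ) (hv : ∀ k : ℕ, v k = (lam1 ^ (k + 1) - lam2 ^ (k + 1)) / (lam1 - lam2))
    (Dop : (ℕ → ℝ) → (ℕ → ℝ)) (hD : ∀ x k, Dop x k = x k + x (k + 1))
    (hconv : lam1 * (1 - α) < α)
    (hne1 : α - lam1 * (1 - α) ≠ 0) (hne2 : α - lam2 * (1 - α) ≠ 0) :
    ∀ p : ℕ,
      ∑' k : ℕ, w k * (Dop^[p] v) k =
        (1 + lam1) ^ p * (α / (lam1 - lam2)) *
          (lam1 / (α - lam1 * (1 - α)) -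
            ((1 + lam2) / (1 + lam1)) ^ p * lam2 / (α - lam2 * (1 - α))) := by
  intro p
  have h4c : 0 < 1 - 4 * c := by linarith
  have hs0 : 0 < Real.sqrt (1 - 4 * c) := Real.sqrt_pos.mpr h4c
  have hs1 : Real.sqrt (1 - 4 * c) < 1 - 2 * c := by
    have h := Real.sqrt_lt_sqrt h4c.le (show 1 - 4 * c < (1 - 2*c)^2 by nlinarith)
    rwa [Real.sqrt_sq (by linarith)] at h
  have h2c : (0:ℝ) < 2 * c := by linarith
  have hl2 : 0 < lam2 := by
    rw [h2]; exact div_pos (by linarith) h2c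
  have hl12 : lam2 < lam1 := by
    rw [h1, h2, div_lt_div_iff₀ h2c h2c]; nlinarith
  have hl1 : 0 < lam1 := hl2.trans hl12
  have hne12 : lam1 - lam2 ≠ 0 := sub_ne_zero.mpr (ne_of_gt hl12)
  have hαne : α ≠ 0 := ne_of_gt hα0
  set q : ℝ := (1 - α) / α with hq_def
  have hq0 : 0 ≤ q := div_nonneg (by linarith) hα0.le
  have hqeq : 1 / α - 1 = q := by rw [hq_def]; field_simp
  have hr1 : q * lam1 < 1 := by
    rw [hq_def, div_mul_eq_mul_div, div_lt_one hα0]; linarith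
  have hr10 : 0 ≤ q * lam1 := mul_nonneg hq0 hl1.le
  have hr2 : q * lam2 < 1 :=
    lt_of_le_of_lt (mul_le_mul_of_nonneg_left hl12.le hq0) hr1
  have hr20 : 0 ≤ q * lam2 := mul_nonneg hq0 hl2.le
  have key : ∀ n k, Dop^[n] v k =
      ((1 + lam1) ^ n * lam1 ^ (k + 1) - (1 + lam2) ^ n * lam2 ^ (k + 1)) / (lam1 - lam2) := by
    intro n
    induction n with
    | zero => intro k; simp [hv]
    | succ m ih =>
      intro k
      rw [Function.iterate_succ_apply', hD, ih, ih]
      field_simp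
      ring
  set a1 : ℝ := (1 + lam1) ^ p * lam1 / (lam1 - lam2) with ha1
  set a2 : ℝ := (1 + lam2) ^ p * lam2 / (lam1 - lam2) with ha2
  have hterm : ∀ k, w k * Dop^[p] v k = a1 * (q * lam1) ^ k - a2 * (q * lam2) ^ k := by
    intro k
    rw [hw, key, hqeq, ha1, ha2, mul_pow, mul_pow, pow_succ, pow_succ]
    field_simp
  have hsum1 : Summable (fun k => a1 * (q * lam1) ^ k) :=
    (summable_geometric_of_lt_one hr10 hr1).mul_left _
  have hsum2 : Summable (fun k => a2 * (q * lam2) ^ k) :=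
    (summable_geometric_of_lt_one hr20 hr2).mul_left _
  rw [tsum_congr hterm, Summable.tsum_sub hsum1 hsum2, tsum_mul_left, tsum_mul_left,
    tsum_geometric_of_lt_one hr10 hr1, tsum_geometric_of_lt_one hr20 hr2, ha1, ha2, hq_def]
  have h1l1 : (1 : ℝ) + lam1 ≠ 0 := by positivity
  have e1 : 1 - (1 - α) / α * lam1 = (α - lam1 * (1 - α)) / α := by
    field_simp
  have e2 : 1 - (1 - α) / α * lam2 = (α - lam2 * (1 - α)) / α := by
    field_simp
  rw [e1, e2, inv_div, inv_div, div_pow]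
  field_simp
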